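/- Let γ > 1 and consider an ideal-MHD state with ρ > 0 and p > 0. Then the 8×8 entropy Jacobian matrix H, with a² = γp/ρ, E = p/(γ−1) + ½ρ‖u‖² + ½‖B‖², h = a²/(γ−1) + ½‖u‖², and rows (ρ, ρu, ρv, ρw, E−½‖B‖², 0,0,0); (ρu, ρu²+p, ρuv, ρuw, ρhu, 0,0,0); (ρv, ρuv, ρv²+p, ρvw, ρhv, 0,0,0); (ρw, ρuw, ρvw, ρw²+p, ρhw, 0,0,0); (E−½‖B‖², ρhu, ρhv, ρhw, ρh² − a²p/(γ−1) + a²‖B‖²/γ, pB₁/ρ, pB₂/ρ, pB₃/ρ); (0,0,0,0,pB₁/ρ, p/ρ, 0, 0); (0,0,0,0,pB₂/ρ, 0, p/ρ, 0); (0,0,0,0,pB₃/ρ, 0, 0, p/ρ), is symmetric positive definite. -/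

import Mathlib

open Matrix

noncomputable section

private lemma aux_sq_zero {c t : ℝ} (hc : 0 < c) (h : c * t ^ 2 ≤ 0) : t = 0 := by
  by_contra h'
  have h2 : 0 < t ^ 2 := by positivity
  nlinarith

set_option maxHeartbeats 1000000 in
private lemma mhd_expand (γ ρ u v w p B1 B2 B3 : ℝ) (hγ : 1 < γ) (hρ : 0 < ρ)
    (x0 x1 x2 x3 x4 x5 x6 x7 : ℝ) :
    let a2 := γ * p / ρ
    let usq := u ^ 2 + v ^ 2 + w ^ 2
    let Bsq := B1 ^ 2 + B2 ^ 2 + B3 ^ 2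
    let E := p / (γ - 1) + ρ * usq / 2 + Bsq / 2
    let hh := a2 / (γ - 1) + usq / 2
    let H : Matrix (Fin 8) (Fin 8) ℝ := Matrix.of
      ![![ρ, ρ * u, ρ * v, ρ * w, E - Bsq / 2, 0, 0, 0],
        ![ρ * u, ρ * u ^ 2 + p, ρ * u * v, ρ * u * w, ρ * hh * u, 0, 0, 0],
        ![ρ * v, ρ * u * v, ρ * v ^ 2 + p, ρ * v * w, ρ * hh * v, 0, 0, 0],
        ![ρ * w, ρ * u * w, ρ * v * w, ρ * w ^ 2 + p, ρ * hh * w, 0, 0, 0],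
        ![E - Bsq / 2, ρ * hh * u, ρ * hh * v, ρ * hh * w,
          ρ * hh ^ 2 - a2 * p / (γ - 1) + a2 * Bsq / γ,
          p * B1 / ρ, p * B2 / ρ, p * B3 / ρ],
        ![0, 0, 0, 0, p * B1 / ρ, p / ρ, 0, 0],
        ![0, 0, 0, 0, p * B2 / ρ, 0, p / ρ, 0],
        ![0, 0, 0, 0, p * B3 / ρ, 0, 0, p / ρ]]
    dotProduct (star ![x0,x1,x2,x3,x4,x5,x6,x7]) (H *ᵥ ![x0,x1,x2,x3,x4,x5,x6,x7]) =
        ρ * (x0 + u * x1 + v * x2 + w * x3 + (hh - p / ρ) * x4) ^ 2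
        + p * (x1 + u * x4) ^ 2 + p * (x2 + v * x4) ^ 2 + p * (x3 + w * x4) ^ 2
        + p / ρ * (x5 + B1 * x4) ^ 2 + p / ρ * (x6 + B2 * x4) ^ 2
        + p / ρ * (x7 + B3 * x4) ^ 2
        + p ^ 2 / (ρ * (γ - 1)) * x4 ^ 2 := by
  intro a2 usq Bsq E hh H
  have hγ1 : (0:ℝ) < γ - 1 := by linarith
  have hγ0 : (0:ℝ) < γ := by linarith
  simp only [H, E, hh, a2, usq, Bsq, Matrix.cons_mulVec, Matrix.cons_dotProduct,
    Matrix.dotProduct_of_isEmpty, Matrix.empty_mulVec, Matrix.cons_val_zero, Matrix.cons_val_one,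
    Matrix.head_cons, star_trivial, add_zero, Matrix.tail_cons]
  field_simp
  ring

set_option maxHeartbeats 1000000 in
/-- the entropy Jacobian matrix H of the ideal MHD system is symmetric
positive definite. -/
theorem entropy_jacobian_posDef
    (γ ρ u v w p B1 B2 B3 : ℝ) (hγ : 1 < γ) (hρ : 0 < ρ) (hp : 0 < p) :
    let a2 := γ * p / ρ
    let usq := u ^ 2 + v ^ 2 + w ^ 2
    let Bsq := B1 ^ 2 + B2 ^ 2 + B3 ^ 2
    let E := p / (γ - 1) + ρ * usq / 2 + Bsq / 2
    let hh := a2 / (γ - 1) + usq / 2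
    let H : Matrix (Fin 8) (Fin 8) ℝ := Matrix.of
      ![![ρ, ρ * u, ρ * v, ρ * w, E - Bsq / 2, 0, 0, 0],
        ![ρ * u, ρ * u ^ 2 + p, ρ * u * v, ρ * u * w, ρ * hh * u, 0, 0, 0],
        ![ρ * v, ρ * u * v, ρ * v ^ 2 + p, ρ * v * w, ρ * hh * v, 0, 0, 0],
        ![ρ * w, ρ * u * w, ρ * v * w, ρ * w ^ 2 + p, ρ * hh * w, 0, 0, 0],
        ![E - Bsq / 2, ρ * hh * u, ρ * hh * v, ρ * hh * w,
          ρ * hh ^ 2 - a2 * p / (γ - 1) + a2 * Bsq / γ,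
          p * B1 / ρ, p * B2 / ρ, p * B3 / ρ],
        ![0, 0, 0, 0, p * B1 / ρ, p / ρ, 0, 0],
        ![0, 0, 0, 0, p * B2 / ρ, 0, p / ρ, 0],
        ![0, 0, 0, 0, p * B3 / ρ, 0, 0, p / ρ]]
    H.PosDef := by
  intro a2 usq Bsq E hh H
  have hγ1 : (0 : ℝ) < γ - 1 := by linarith
  have hγ0 : (0 : ℝ) < γ := by linarith
  rw [Matrix.posDef_iff_dotProduct_mulVec]
  constructor
  · ext i j
    fin_cases i <;> fin_cases j <;> rfl
  · intro x hx
    have hpρ : 0 < p / ρ := div_pos hp hρ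
    have hc4 : 0 < p ^ 2 / (ρ * (γ - 1)) := by positivity
    have hxv : x = ![x 0, x 1, x 2, x 3, x 4, x 5, x 6, x 7] := by
      funext i; fin_cases i <;> rfl
    have key : dotProduct (star ![x 0, x 1, x 2, x 3, x 4, x 5, x 6, x 7])
        (H *ᵥ ![x 0, x 1, x 2, x 3, x 4, x 5, x 6, x 7]) =
        ρ * (x 0 + u * x 1 + v * x 2 + w * x 3 + (hh - p / ρ) * x 4) ^ 2
        + p * (x 1 + u * x 4) ^ 2 + p * (x 2 + v * x 4) ^ 2 + p * (x 3 + w * x 4) ^ 2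
        + p / ρ * (x 5 + B1 * x 4) ^ 2 + p / ρ * (x 6 + B2 * x 4) ^ 2
        + p / ρ * (x 7 + B3 * x 4) ^ 2
        + p ^ 2 / (ρ * (γ - 1)) * x 4 ^ 2 :=
      mhd_expand γ ρ u v w p B1 B2 B3 hγ hρ (x 0) (x 1) (x 2) (x 3) (x 4) (x 5) (x 6) (x 7)
    rw [hxv, key]
    by_contra hle
    push_neg at hle
    have m0 := mul_nonneg hρ.le
      (sq_nonneg (x 0 + u * x 1 + v * x 2 + w * x 3 + (hh - p / ρ) * x 4))
    have m1 := mul_nonneg hp.le (sq_nonneg (x 1 + u * x 4))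
    have m2 := mul_nonneg hp.le (sq_nonneg (x 2 + v * x 4))
    have m3 := mul_nonneg hp.le (sq_nonneg (x 3 + w * x 4))
    have m5 := mul_nonneg hpρ.le (sq_nonneg (x 5 + B1 * x 4))
    have m6 := mul_nonneg hpρ.le (sq_nonneg (x 6 + B2 * x 4))
    have m7 := mul_nonneg hpρ.le (sq_nonneg (x 7 + B3 * x 4))
    have h4 : x 4 = 0 := aux_sq_zero hc4 (by linarith)
    rw [h4] at hle
    simp only [mul_zero, add_zero, ne_eq, OfNat.ofNat_ne_zero, not_false_eq_true,
      zero_pow] at hle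
    have n0 := mul_nonneg hρ.le (sq_nonneg (x 0 + u * x 1 + v * x 2 + w * x 3))
    have n1 := mul_nonneg hp.le (sq_nonneg (x 1))
    have n2 := mul_nonneg hp.le (sq_nonneg (x 2))
    have n3 := mul_nonneg hp.le (sq_nonneg (x 3))
    have n5 := mul_nonneg hpρ.le (sq_nonneg (x 5))
    have n6 := mul_nonneg hpρ.le (sq_nonneg (x 6))
    have n7 := mul_nonneg hpρ.le (sq_nonneg (x 7))
    have h1 : x 1 = 0 := aux_sq_zero hp (by linarith)
    have h2 : x 2 = 0 := aux_sq_zero hp (by linarith)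
    have h3 : x 3 = 0 := aux_sq_zero hp (by linarith)
    have h5 : x 5 = 0 := aux_sq_zero hpρ (by linarith)
    have h6 : x 6 = 0 := aux_sq_zero hpρ (by linarith)
    have h7 : x 7 = 0 := aux_sq_zero hpρ (by linarith)
    rw [h1, h2, h3] at hle
    simp only [mul_zero, add_zero] at hle
    have h0 : x 0 = 0 := aux_sq_zero hρ (by linarith)
    exact hx (funext fun i => by fin_cases i <;> assumption)

end
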